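/- For every p ≥ 0 and q ≥ 0, the set-level bijection G^{p+1} × H^{q+1} → (G^p × H^q) × (G × H) sending (g⃗̄, h⃗̄) ↦ (γ_⋊(g⃗̄, h⃗̄), (ḡ_{p+1}, h̄_{q+1})) identifies PG(p) × PH(q) with NG(p) ⋊ NH(q) × (G ⋊ H) equivariantly; in particular γ_⋊ is surjective and its fibers are exactly the orbits of the G ⋊ H action. -/
import Mathlib


/-- The semidirect product multiplication on `G × H`. -/
def sdMul {G : Type*} [Group G] (H : Subgroup G) (a b : G × H) : G × H :=
  (a.1 * (a.2 : G) * b.1 * ((a.2 : G))⁻¹, a.2 * b.2)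

/-- The right action of `G ⋊ H` on `PG(p) × PH(q)`. -/
def sdAct {G : Type*} [Group G] {H : Subgroup G} (p q : ℕ)
    (x : (Fin (p + 1) → G) × (Fin (q + 1) → H)) (a : G × H) :
    (Fin (p + 1) → G) × (Fin (q + 1) → H) :=
  (fun k => ((a.2 : G))⁻¹ * x.1 k * a.1 * (a.2 : G), fun k => x.2 k * a.2)

/-- `γ_⋊ : PG(p) × PH(q) → NG(p) ⋊ NH(q)`. -/
def gammaSemi {G : Type*} [Group G] {H : Subgroup G} (p q : ℕ)
    (x : (Fin (p + 1) → G) × (Fin (q + 1) → H)) : (Fin p → G) × (Fin q → H) :=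
  (fun k => (x.2 (Fin.last q) : G) * (x.1 k.castSucc * (x.1 k.succ)⁻¹) *
      ((x.2 (Fin.last q) : G))⁻¹,
   fun k => x.2 k.castSucc * (x.2 k.succ)⁻¹)

/-- The set-level identification `PG(p) × PH(q) ≃ (NG(p) ⋊ NH(q)) × (G ⋊ H)`:
`(g⃗, h⃗) ↦ (γ_⋊(g⃗, h⃗), (ḡ_{p+1}, h̄_{q+1}))`. -/
def phiTriv {G : Type*} [Group G] {H : Subgroup G} (p q : ℕ)
    (x : (Fin (p + 1) → G) × (Fin (q + 1) → H)) :
    ((Fin p → G) × (Fin q → H)) × (G × H) :=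
  (gammaSemi p q x, (x.1 (Fin.last p), x.2 (Fin.last q)))

/-- Reconstruct the `G`-vector from `γ` data. -/
def ginv {G : Type*} [Group G] (p : ℕ) (c : Fin p → G) (g h : G) : Fin (p + 1) → G :=
  Fin.reverseInduction g (fun k ih => h⁻¹ * c k * h * ih)

/-- Reconstruct the `H`-vector from `γ` data. -/
def hinv {G : Type*} [Group G] {H : Subgroup G} (q : ℕ) (d : Fin q → H) (h : H) :
    Fin (q + 1) → H :=
  Fin.reverseInduction h (fun k ih => d k * ih)

/-- The inverse of `phiTriv`. -/
def phiInv {G : Type*} [Group G] {H : Subgroup G} (p q : ℕ)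
    (y : ((Fin p → G) × (Fin q → H)) × (G × H)) :
    (Fin (p + 1) → G) × (Fin (q + 1) → H) :=
  (ginv p y.1.1 y.2.1 (y.2.2 : G), hinv q y.1.2 y.2.2)

lemma hinv_last {G : Type*} [Group G] {H : Subgroup G} (q : ℕ) (d : Fin q → H) (h : H) :
    hinv q d h (Fin.last q) = h := by simp [hinv]

lemma hinv_castSucc {G : Type*} [Group G] {H : Subgroup G} (q : ℕ) (d : Fin q → H) (h : H)
    (k : Fin q) : hinv q d h k.castSucc = d k * hinv q d h k.succ := by simp [hinv]

lemma ginv_last {G : Type*} [Group G] (p : ℕ) (c : Fin p → G) (g h : G) :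
    ginv p c g h (Fin.last p) = g := by simp [ginv]

lemma ginv_castSucc {G : Type*} [Group G] (p : ℕ) (c : Fin p → G) (g h : G) (k : Fin p) :
    ginv p c g h k.castSucc = h⁻¹ * c k * h * ginv p c g h k.succ := by simp [ginv]

lemma phiInv_phiTriv {G : Type*} [Group G] {H : Subgroup G} (p q : ℕ)
    (x : (Fin (p + 1) → G) × (Fin (q + 1) → H)) : phiInv p q (phiTriv p q x) = x := by
  obtain ⟨f, g⟩ := x
  have hg : ∀ k, (phiInv p q (phiTriv p q (f, g))).2 k = g k := by
    intro k
    induction k using Fin.reverseInduction with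
    | last => simp [phiInv, hinv_last, phiTriv]
    | cast k ih =>
      rw [phiInv] at ih ⊢
      dsimp only at ih ⊢
      rw [hinv_castSucc, ih]
      simp [phiTriv, gammaSemi]
  have hf : ∀ k, (phiInv p q (phiTriv p q (f, g))).1 k = f k := by
    intro k
    induction k using Fin.reverseInduction with
    | last => simp [phiInv, ginv_last, phiTriv]
    | cast k ih =>
      rw [phiInv] at ih ⊢
      dsimp only at ih ⊢
      rw [ginv_castSucc, ih]
      simp only [phiTriv, gammaSemi]
      group
  exact Prod.ext (funext hf) (funext hg)

lemma phiTriv_phiInv {G : Type*} [Group G] {H : Subgroup G} (p q : ℕ)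
    (y : ((Fin p → G) × (Fin q → H)) × (G × H)) : phiTriv p q (phiInv p q y) = y := by
  obtain ⟨⟨c, d⟩, g, h⟩ := y
  have h2 : ∀ k, (hinv q d h) k.castSucc * ((hinv q d h) k.succ)⁻¹ = d k := by
    intro k; rw [hinv_castSucc]; group
  have hl := hinv_last q d h
  have h1 : ∀ k : Fin p, (hinv q d h (Fin.last q) : G) *
      ((ginv p c g (h : G)) k.castSucc * ((ginv p c g (h : G)) k.succ)⁻¹) *
      ((hinv q d h (Fin.last q) : G))⁻¹ = c k := by
    intro k; rw [ginv_castSucc, hl]; group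
  simp only [phiTriv, phiInv, gammaSemi]
  refine Prod.ext (Prod.ext (funext h1) (funext h2)) (Prod.ext ?_ ?_)
  · simp [ginv_last]
  · simp [hl]

lemma gammaSemi_sdAct {G : Type*} [Group G] {H : Subgroup G} (p q : ℕ)
    (x : (Fin (p + 1) → G) × (Fin (q + 1) → H)) (a : G × H) :
    gammaSemi p q (sdAct p q x a) = gammaSemi p q x := by
  simp only [gammaSemi, sdAct]
  refine Prod.ext (funext fun k => ?_) (funext fun k => ?_)
  · push_cast
    group
  · push_cast [Subtype.ext_iff]
    group

/-- the map `x ↦ (γ_⋊ x, (ḡ_{p+1}, h̄_{q+1}))` is a bijection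
identifying `PG(p) × PH(q)` with `(NG(p) ⋊ NH(q)) × (G ⋊ H)` equivariantly
(`γ_⋊` is invariant under the `G ⋊ H`-action); in particular `γ_⋊` is surjective
and its fibers are exactly the orbits of the `G ⋊ H`-action. -/
theorem phiTriv_bijective {G : Type*} [Group G] {H : Subgroup G} (p q : ℕ) :
    Function.Bijective (phiTriv (G := G) (H := H) p q) ∧
    (∀ (x : (Fin (p + 1) → G) × (Fin (q + 1) → H)) (a : G × H),
      gammaSemi p q (sdAct p q x a) = gammaSemi p q x) ∧
    Function.Surjective (gammaSemi (G := G) (H := H) p q) ∧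
    (∀ x y : (Fin (p + 1) → G) × (Fin (q + 1) → H),
      gammaSemi p q x = gammaSemi p q y ↔ ∃ a : G × H, y = sdAct p q x a) := by
  constructor
  · exact ⟨Function.LeftInverse.injective (phiInv_phiTriv p q),
      Function.RightInverse.surjective (phiTriv_phiInv p q)⟩
  refine ⟨gammaSemi_sdAct p q, ?_, ?_⟩
  · intro c
    exact ⟨phiInv p q (c, 1, 1), congrArg Prod.fst (phiTriv_phiInv p q (c, 1, 1))⟩
  · intro x y
    constructor
    · intro hxy
      set a2 : H := (x.2 (Fin.last q))⁻¹ * y.2 (Fin.last q) with ha2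
      set a1 : G := (x.1 (Fin.last p))⁻¹ * (a2 : G) * y.1 (Fin.last p) * ((a2 : G))⁻¹ with ha1
      refine ⟨(a1, a2), ?_⟩
      have : phiTriv p q (sdAct p q x (a1, a2)) = phiTriv p q y := by
        simp only [phiTriv, sdAct]
        refine Prod.ext ?_ (Prod.ext ?_ ?_)
        · rw [show (fun k => ((a2 : G))⁻¹ * x.1 k * a1 * (a2 : G), fun k => x.2 k * a2)
            = sdAct p q x (a1, a2) from rfl, gammaSemi_sdAct, hxy]
        · simp only [ha1]; group
        · simp only [ha2]; group
      have := congrArg (phiInv p q) this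
      rw [phiInv_phiTriv, phiInv_phiTriv] at this
      exact this.symm
    · rintro ⟨a, rfl⟩
      exact (gammaSemi_sdAct p q x a).symm
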